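/- Let $j\in\mathbb{R}^d\setminus\{0\}$ and $s\le 0$. There exists $C=C(j,s)$, independent of $p\in[1,\infty]$ and of $\varepsilon\in(0,1]$, such that for all $f\in\mathcal{S}(\mathbb{R}^d)$, $\|f(\cdot)e^{ij\cdot x/\varepsilon}\|_{\mathcal{F}L^p_s}\le C\,\varepsilon^{|s|}\,\|f\|_{\mathcal{F}L^p_{|s|}}$. -/

import Mathlib

open MeasureTheory FourierTransform
open scoped RealInnerProductSpace ENNReal

noncomputable section

/-- The Fourier–Lebesgue norm `‖f‖_{𝓕L^p_s} = ‖⟨·⟩^s 𝓕f‖_{L^p}`. -/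
def FLnorm (d : ℕ) (s : ℝ) (p : ℝ≥0∞) (f : EuclideanSpace ℝ (Fin d) → ℂ) : ℝ≥0∞ :=
  eLpNorm (fun ξ => ‖𝓕 f ξ‖ * (1 + ‖ξ‖ ^ 2) ^ (s / 2)) p volume

lemma fourier_mod {d : ℕ} (f : SchwartzMap (EuclideanSpace ℝ (Fin d)) ℂ)
    (v : EuclideanSpace ℝ (Fin d)) (ξ : EuclideanSpace ℝ (Fin d)) :
    𝓕 (fun x => f x * Complex.exp (Complex.I * ((2 * Real.pi * ⟪v, x⟫ : ℝ) : ℂ))) ξ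
      = 𝓕 f (ξ - v) := by
  rw [Real.fourier_eq', SchwartzMap.fourier_coe, Real.fourier_eq']
  congr 1
  ext x
  have h : ((-2 * Real.pi * ⟪x, ξ - v⟫ : ℝ) : ℂ) * Complex.I
      = ((-2 * Real.pi * ⟪x, ξ⟫ : ℝ) : ℂ) * Complex.I
        + Complex.I * ((2 * Real.pi * ⟪v, x⟫ : ℝ) : ℂ) := by
    have : ⟪x, ξ - v⟫ = ⟪x, ξ⟫ - ⟪v, x⟫ := by
      rw [inner_sub_right, real_inner_comm v x]
    rw [this]; push_cast; ring
  rw [smul_eq_mul, smul_eq_mul, h, Complex.exp_add]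
  ring

lemma key_rpow {t a A B : ℝ} (ht : 0 ≤ t) (ha : 0 < a) (hA : 0 < A) (hB : 0 < B)
    (h : 1 ≤ a ^ 2 * (A * B)) : A ^ (-t / 2) ≤ a ^ t * B ^ (t / 2) := by
  have hA2 : (0:ℝ) < A ^ (t / 2) := Real.rpow_pos_of_pos hA _
  have h1 : (1:ℝ) ≤ a ^ t * B ^ (t / 2) * A ^ (t / 2) := by
    calc (1:ℝ) = 1 ^ (t / 2) := (Real.one_rpow _).symm
    _ ≤ (a ^ 2 * (A * B)) ^ (t / 2) :=
        Real.rpow_le_rpow zero_le_one h (by positivity)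
    _ = a ^ t * B ^ (t / 2) * A ^ (t / 2) := by
        rw [Real.mul_rpow (by positivity) (by positivity), Real.mul_rpow hA.le hB.le,
          ← Real.rpow_natCast a 2, ← Real.rpow_mul ha.le]
        push_cast; ring_nf
  have h2 := mul_le_mul_of_nonneg_left h1 (inv_nonneg.mpr hA2.le)
  calc A ^ (-t / 2) = (A ^ (t / 2))⁻¹ * 1 := by
        rw [neg_div, Real.rpow_neg hA.le, mul_one]
  _ ≤ (A ^ (t / 2))⁻¹ * (a ^ t * B ^ (t / 2) * A ^ (t / 2)) := h2
  _ = a ^ t * B ^ (t / 2) := by field_simp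

/-- For `j ≠ 0` and `s ≤ 0`, the modulation `f e^{ij·x/ε}` loses a factor
`ε^{|s|}` in Fourier–Lebesgue spaces, uniformly in `p ∈ [1,∞]` and `ε ∈ (0,1]`. -/
theorem FLnorm_modulation_decay (d : ℕ) (hd : 1 ≤ d)
    (j : EuclideanSpace ℝ (Fin d)) (hj : j ≠ 0) (s : ℝ) (hs : s ≤ 0) :
    ∃ C : ℝ, 0 < C ∧ ∀ p : ℝ≥0∞, 1 ≤ p → ∀ ε : ℝ, ε ∈ Set.Ioc (0 : ℝ) 1 →
      ∀ f : SchwartzMap (EuclideanSpace ℝ (Fin d)) ℂ,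
        FLnorm d s p (fun x => f x * Complex.exp (Complex.I * ((⟪j, x⟫ / ε : ℝ) : ℂ))) ≤
          ENNReal.ofReal (C * ε ^ |s|) * FLnorm d |s| p (fun x => f x) := by
  have hjn : (0:ℝ) < ‖j‖ := norm_pos_iff.mpr hj
  obtain ⟨t, ht, hst, hts⟩ : ∃ t : ℝ, 0 ≤ t ∧ s = -t ∧ |s| = t :=
    ⟨|s|, abs_nonneg s, by rw [abs_of_nonpos hs, neg_neg], rfl⟩
  obtain ⟨c₀, hc₀, hc₀def⟩ : ∃ c : ℝ, 0 < c ∧ c = 2 * Real.sqrt 2 * Real.pi / ‖j‖ := by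
    refine ⟨_, ?_, rfl⟩
    have := Real.pi_pos
    have h2 : (0:ℝ) < Real.sqrt 2 := Real.sqrt_pos.mpr (by norm_num)
    positivity
  rw [hts]
  refine ⟨c₀ ^ t, Real.rpow_pos_of_pos hc₀ t, ?_⟩
  intro p hp ε hε f
  obtain ⟨hε0, hε1⟩ := hε
  obtain ⟨v, hvdef⟩ : ∃ v : EuclideanSpace ℝ (Fin d), v = (2 * Real.pi * ε)⁻¹ • j :=
    ⟨_, rfl⟩
  have hπ := Real.pi_pos
  -- the modulated function
  have hmod : (fun x => f x * Complex.exp (Complex.I * ((⟪j, x⟫ / ε : ℝ) : ℂ)))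
      = fun x => f x * Complex.exp (Complex.I * ((2 * Real.pi * ⟪v, x⟫ : ℝ) : ℂ)) := by
    funext x
    have hinner : (⟪j, x⟫ / ε : ℝ) = 2 * Real.pi * ⟪v, x⟫ := by
      rw [hvdef, real_inner_smul_left]
      field_simp
    rw [hinner]
  have hFg : 𝓕 (fun x => f x * Complex.exp (Complex.I * ((⟪j, x⟫ / ε : ℝ) : ℂ)))
      = fun ξ => 𝓕 (⇑f) (ξ - v) := by
    rw [hmod]; exact funext (fourier_mod f v)
  -- norm of v
  have hv : ‖v‖ = ‖j‖ / (2 * Real.pi * ε) := by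
    rw [hvdef, norm_smul, norm_inv, Real.norm_eq_abs,
      abs_of_pos (mul_pos (by positivity) hε0), inv_mul_eq_div]
  -- key positivity claim
  have hclaim : ∀ ξ : EuclideanSpace ℝ (Fin d),
      1 ≤ (c₀ * ε) ^ 2 * ((1 + ‖ξ‖ ^ 2) * (1 + ‖ξ - v‖ ^ 2)) := by
    intro ξ
    have htri : ‖v‖ ≤ ‖ξ‖ + ‖ξ - v‖ := by
      have : v = ξ - (ξ - v) := by abel
      calc ‖v‖ = ‖ξ - (ξ - v)‖ := by rw [← this]
      _ ≤ ‖ξ‖ + ‖ξ - v‖ := norm_sub_le _ _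
    have hP : 1 + ‖v‖ ^ 2 ≤ 2 * ((1 + ‖ξ‖ ^ 2) * (1 + ‖ξ - v‖ ^ 2)) := by
      nlinarith [norm_nonneg ξ, norm_nonneg (ξ - v), norm_nonneg v,
        sq_nonneg (‖ξ‖ - ‖ξ - v‖), sq_nonneg (‖ξ‖ * ‖ξ - v‖)]
    have hc : (c₀ * ε) ^ 2 * ‖v‖ ^ 2 = 2 := by
      rw [hv, hc₀def, ← mul_pow]
      have heq : 2 * Real.sqrt 2 * Real.pi / ‖j‖ * ε * (‖j‖ / (2 * Real.pi * ε))
          = Real.sqrt 2 := by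
        field_simp
      rw [heq]
      exact Real.sq_sqrt (by norm_num)
    nlinarith [mul_le_mul_of_nonneg_left hP (sq_nonneg (c₀ * ε)), hc,
      sq_nonneg (c₀ * ε), norm_nonneg v]
  -- pointwise estimate
  have hpt : ∀ ξ : EuclideanSpace ℝ (Fin d),
      ‖𝓕 (⇑f) (ξ - v)‖ * (1 + ‖ξ‖ ^ 2) ^ (s / 2)
        ≤ (c₀ ^ t * ε ^ t) * (‖𝓕 (⇑f) (ξ - v)‖ * (1 + ‖ξ - v‖ ^ 2) ^ (t / 2)) := by
    intro ξ
    have hA : (0:ℝ) < 1 + ‖ξ‖ ^ 2 := by positivity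
    have hB : (0:ℝ) < 1 + ‖ξ - v‖ ^ 2 := by positivity
    have h1 : (1 + ‖ξ‖ ^ 2) ^ (s / 2)
        ≤ (c₀ * ε) ^ t * (1 + ‖ξ - v‖ ^ 2) ^ (t / 2) := by
      rw [hst]
      exact key_rpow ht (mul_pos hc₀ hε0) hA hB (hclaim ξ)
    have h2 : (c₀ * ε) ^ t = c₀ ^ t * ε ^ t := Real.mul_rpow hc₀.le hε0.le
    calc ‖𝓕 (⇑f) (ξ - v)‖ * (1 + ‖ξ‖ ^ 2) ^ (s / 2)
        ≤ ‖𝓕 (⇑f) (ξ - v)‖ * ((c₀ * ε) ^ t * (1 + ‖ξ - v‖ ^ 2) ^ (t / 2)) :=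
          mul_le_mul_of_nonneg_left h1 (norm_nonneg _)
    _ = (c₀ ^ t * ε ^ t) * (‖𝓕 (⇑f) (ξ - v)‖ * (1 + ‖ξ - v‖ ^ 2) ^ (t / 2)) := by
          rw [h2]; ring
  -- the target function on the right
  obtain ⟨G, hGdef⟩ : ∃ G : EuclideanSpace ℝ (Fin d) → ℝ,
      G = fun ξ => ‖𝓕 (⇑f) ξ‖ * (1 + ‖ξ‖ ^ 2) ^ (t / 2) := ⟨_, rfl⟩
  have hGcont : Continuous G := by
    rw [hGdef]
    have h1 : Continuous (𝓕 (⇑f)) := by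
      rw [← SchwartzMap.fourier_coe, ← SchwartzMap.fourierTransformCLM_apply (𝕜 := ℝ)]
      exact (SchwartzMap.fourierTransformCLM ℝ f).continuous
    have h2 : Continuous fun ξ : EuclideanSpace ℝ (Fin d) =>
        (1 + ‖ξ‖ ^ 2) ^ (t / 2) :=
      (continuous_const.add (continuous_norm.pow 2)).rpow_const
        (fun ξ => Or.inl (by positivity : (1:ℝ) + ‖ξ‖ ^ 2 ≠ 0))
    exact (h1.norm.mul h2)
  have hmp : MeasurePreserving (fun ξ : EuclideanSpace ℝ (Fin d) => ξ - v) volume volume := by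
    simpa [sub_eq_add_neg] using measurePreserving_add_right
      (volume : Measure (EuclideanSpace ℝ (Fin d))) (-v)
  have hkey : FLnorm d s p (fun x => f x * Complex.exp (Complex.I * ((⟪j, x⟫ / ε : ℝ) : ℂ)))
      ≤ ENNReal.ofReal (c₀ ^ t * ε ^ t) * eLpNorm G p volume := by
    rw [FLnorm, hFg]
    calc eLpNorm (fun ξ => ‖𝓕 (⇑f) (ξ - v)‖ * (1 + ‖ξ‖ ^ 2) ^ (s / 2)) p volume
        ≤ eLpNorm ((c₀ ^ t * ε ^ t) • (G ∘ fun ξ => ξ - v)) p volume := by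
          refine eLpNorm_mono (fun ξ => ?_)
          simp only [Pi.smul_apply, Function.comp_apply, smul_eq_mul, hGdef,
            Real.norm_eq_abs]
          rw [abs_of_nonneg (by positivity), abs_of_nonneg (mul_nonneg
            (mul_nonneg (Real.rpow_nonneg hc₀.le t) (Real.rpow_nonneg hε0.le t))
            (mul_nonneg (norm_nonneg _) (Real.rpow_nonneg (by positivity) _)))]
          exact hpt ξ
    _ = ‖(c₀ ^ t * ε ^ t)‖₊ • eLpNorm (G ∘ fun ξ => ξ - v) p volume :=
          eLpNorm_const_smul _ _ _ _
    _ = ENNReal.ofReal (c₀ ^ t * ε ^ t) * eLpNorm G p volume := by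
          rw [eLpNorm_comp_measurePreserving hGcont.aestronglyMeasurable hmp,
            ENNReal.smul_def, smul_eq_mul, ← enorm_eq_nnnorm, Real.enorm_eq_ofReal (mul_nonneg (Real.rpow_nonneg hc₀.le _) (Real.rpow_nonneg hε0.le _))]
  have hRHS : FLnorm d t p (fun x => f x) = eLpNorm G p volume := by
    rw [FLnorm, hGdef]
  calc FLnorm d s p (fun x => f x * Complex.exp (Complex.I * ((⟪j, x⟫ / ε : ℝ) : ℂ)))
      ≤ ENNReal.ofReal (c₀ ^ t * ε ^ t) * eLpNorm G p volume := hkey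
  _ = ENNReal.ofReal (c₀ ^ t * ε ^ t) * FLnorm d t p (fun x => f x) := by rw [hRHS]
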